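/- Let k > 0, let (c_k, …, c_{k-u}), (a_k, …, a_{k-s}), (b_k, …, b_{k-t}) be integer sequences admissible for k, and let j be an integer with j > c_k and j > a_k. If Σ_{i=0}^{u} C(c_{k-i}, k-i) + Σ_{i=0}^{s} C(a_{k-i}, k-i) = C(j, k) + Σ_{i=0}^{t} C(b_{k-i}, k-i), then C(j, k+1) + Σ_{i=0}^{t} C(b_{k-i}, k+1-i) > Σ_{i=0}^{u} C(c_{k-i}, k+1-i) + Σ_{i=0}^{s} C(a_{k-i}, k+1-i). -/

import Mathlib

/-- Binomial coefficient `C(n, t)` with an integer lower index, `0` when `t < 0`. -/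
def chooseZ (n : ℕ) (t : ℤ) : ℕ := if 0 ≤ t then n.choose t.toNat else 0

/-- `Σ_{i=0}^{s} C(a_{k-i}, j-i)`, where `a i` stands for `a_{k-i}`. -/
def cSumZ (a : ℕ → ℕ) (s : ℕ) (j : ℤ) : ℕ :=
  ∑ i ∈ Finset.range (s + 1), chooseZ (a i) (j - i)

/-- `a i` stands for `n_{k-i}`: the sequence `(n_k, …, n_{k-s})` is admissible for `k` iff
`n_k > n_{k-1} > … > n_{k-s} ≥ k-s > 0`. -/
def Admissible (k s : ℕ) (a : ℕ → ℕ) : Prop :=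
  s < k ∧ (∀ i < s, a (i + 1) < a i) ∧ k - s ≤ a s

namespace KKAux

lemma pascal (m k : ℕ) (hk : 1 ≤ k) : (m+1).choose k = m.choose (k-1) + m.choose k := by
  obtain ⟨k', rfl⟩ : ∃ k', k = k' + 1 := ⟨k - 1, by omega⟩
  simpa using Nat.choose_succ_succ' m k'

lemma choose_lt_choose_left {k a b : ℕ} (hk : 1 ≤ k) (ha : k ≤ a) (h : a < b) :
    a.choose k < b.choose k := by
  have h1 : a.choose k < (a+1).choose k := by
    rw [pascal a k hk]
    have : 0 < a.choose (k-1) := Nat.choose_pos (by omega)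
    omega
  exact lt_of_lt_of_le h1 (Nat.choose_le_choose k h)

lemma choose_growth {k : ℕ} (hk : 1 ≤ k) : ∀ p, k ≤ p → p < p.choose k + k := by
  intro p hp
  induction p with
  | zero => omega
  | succ q ih =>
    rcases Nat.lt_or_ge k (q+1) with h | h
    · have hq : k ≤ q := by omega
      have h2 := ih hq
      rw [pascal q k hk]
      have : 0 < q.choose (k-1) := Nat.choose_pos (by omega)
      omega
    · have : k = q+1 := by omega
      subst this
      simp [Nat.choose_self]

def ftop (k m : ℕ) : ℕ := Nat.findGreatest (fun p => p.choose k ≤ m) (k + m)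

lemma ftop_spec {k m : ℕ} (hk : 1 ≤ k) (hm : 1 ≤ m) : (ftop k m).choose k ≤ m :=
  Nat.findGreatest_spec (P := fun p => p.choose k ≤ m) (m := k) (n := k + m)
    (by omega) (by simpa [Nat.choose_self] using hm)

lemma le_ftop {k m : ℕ} (hk : 1 ≤ k) (hm : 1 ≤ m) : k ≤ ftop k m :=
  Nat.le_findGreatest (by omega) (by simpa [Nat.choose_self] using hm)

lemma lt_ftop_succ {k m : ℕ} (hk : 1 ≤ k) (hm : 1 ≤ m) : m < (ftop k m + 1).choose k := by
  by_contra hcon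
  push_neg at hcon
  rcases Nat.lt_or_ge (k + m) (ftop k m + 1) with h | h
  · have hkf : k ≤ ftop k m + 1 := by omega
    have := choose_growth hk (ftop k m + 1) hkf
    omega
  · exact Nat.findGreatest_is_greatest (Nat.lt_succ_self _) h hcon

lemma ftop_eq {k n m : ℕ} (hk : 1 ≤ k) (hn : k ≤ n) (h1 : n.choose k ≤ m)
    (h2 : m < (n+1).choose k) : ftop k m = n := by
  have hm : 1 ≤ m := le_trans (Nat.choose_pos hn) h1
  have t1 := ftop_spec hk hm
  have t2 := lt_ftop_succ hk hm
  have t3 := le_ftop hk hm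
  have hle : ftop k m ≤ n := by
    by_contra hc
    push_neg at hc
    have := Nat.choose_le_choose k (show n+1 ≤ ftop k m by omega)
    omega
  have hge : n ≤ ftop k m := by
    by_contra hc
    push_neg at hc
    have := Nat.choose_le_choose k (show ftop k m + 1 ≤ n by omega)
    omega
  omega

def f : ℕ → ℕ → ℕ
  | 0, _ => 0
  | (k+1), m =>
    if m = 0 then 0 else
      (ftop (k+1) m).choose (k+2) + f k (m - (ftop (k+1) m).choose (k+1))

@[simp] lemma f_zero (k : ℕ) : f k 0 = 0 := by cases k <;> simp [f]

@[simp] lemma f_zero' (m : ℕ) : f 0 m = 0 := by simp [f]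

lemma f_eval {k m : ℕ} (hm : 1 ≤ m) :
    f (k+1) m = (ftop (k+1) m).choose (k+2) + f k (m - (ftop (k+1) m).choose (k+1)) := by
  simp only [f, if_neg (show ¬ m = 0 by omega)]

lemma fKEY {k m e : ℕ} (hk : 1 ≤ k) (hm : k ≤ m) (he : e < m.choose (k-1)) :
    f k (m.choose k + e) = m.choose (k+1) + f (k-1) e := by
  obtain ⟨k', rfl⟩ : ∃ k', k = k' + 1 := ⟨k - 1, by omega⟩
  have hpos : 1 ≤ m.choose (k'+1) := Nat.choose_pos hm
  have htop : ftop (k'+1) (m.choose (k'+1) + e) = m := by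
    apply ftop_eq (by omega) hm (by omega)
    rw [pascal m (k'+1) (by omega)]
    simp only [Nat.add_sub_cancel] at he ⊢
    omega
  rw [f_eval (by omega), htop]
  simp

lemma f_choose {k n : ℕ} (hk : 1 ≤ k) : f k (n.choose k) = n.choose (k+1) := by
  rcases Nat.lt_or_ge n k with h | h
  · rw [Nat.choose_eq_zero_of_lt h, Nat.choose_eq_zero_of_lt (by omega), f_zero]
  · have h0 : 0 < n.choose (k-1) := Nat.choose_pos (by omega)
    have := fKEY hk h h0
    simpa using this

lemma fKEY2 {k m e : ℕ} (hk : 2 ≤ k) (hm : k ≤ m) (he : e ≤ m.choose (k-1)) :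
    f k (m.choose k + e) = m.choose (k+1) + f (k-1) e := by
  rcases Nat.lt_or_ge e (m.choose (k-1)) with h | h
  · exact fKEY (by omega) hm h
  · have heq : e = m.choose (k-1) := by omega
    subst heq
    rw [Nat.add_comm, ← pascal m k (by omega), f_choose (by omega), pascal m (k+1) (by omega),
      f_choose (k := k-1) (by omega)]
    have e1 : k - 1 + 1 = k := by omega
    have e2 : (k+1) - 1 = k := by omega
    rw [e1, e2]; omega

lemma f_eq_zero {k m : ℕ} (h : m ≤ k) : f k m = 0 := by
  induction k generalizing m with
  | zero => simp
  | succ k ih =>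
    rcases Nat.eq_zero_or_pos m with h0 | h0
    · simp [h0]
    · have htop : ftop (k+1) m = k+1 := by
        apply ftop_eq (by omega) (le_refl _) (by rw [Nat.choose_self]; omega)
        rw [Nat.choose_succ_self_right]
        omega
      rw [f_eval h0, htop, Nat.choose_succ_self, Nat.choose_self]
      simpa using ih (m := m - 1) (by omega)

lemma f_le_choose {k : ℕ} : ∀ {n m : ℕ}, m ≤ n.choose k → f k m ≤ n.choose (k+1) := by
  induction k with
  | zero => intro n m _; simp
  | succ k ih =>
    intro n m hm
    rcases Nat.eq_zero_or_pos m with h0 | h0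
    · simp [h0]
    have hn : k + 1 ≤ n := by
      by_contra hc
      push_neg at hc
      rw [Nat.choose_eq_zero_of_lt hc] at hm
      omega
    set p := ftop (k+1) m with hp
    have t1 : p.choose (k+1) ≤ m := ftop_spec (by omega) h0
    have t2 : m < (p+1).choose (k+1) := lt_ftop_succ (by omega) h0
    have t3 : k+1 ≤ p := le_ftop (by omega) h0
    have hpn : p ≤ n := by
      by_contra hc
      push_neg at hc
      have h1 : n.choose (k+1) < (n+1).choose (k+1) :=
        choose_lt_choose_left (by omega) hn (by omega)
      have h2 := Nat.choose_le_choose (k+1) (show n+1 ≤ p by omega)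
      omega
    rw [f_eval h0, ← hp]
    rcases eq_or_lt_of_le hpn with heq | hlt
    · subst heq
      have hz : m - p.choose (k+1) = 0 := by omega
      rw [hz]
      simp
    · have hr : m - p.choose (k+1) ≤ p.choose k := by
        rw [pascal p (k+1) (by omega)] at t2
        simp only [Nat.add_sub_cancel] at t2
        omega
      have h5 := ih hr
      calc p.choose (k+2) + f k (m - p.choose (k+1)) ≤ p.choose (k+2) + p.choose (k+1) := by omega
        _ = (p+1).choose (k+2) := by
            rw [pascal p (k+2) (by omega)]
            have e : k+2-1 = k+1 := by omega
            rw [e]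
            omega
        _ ≤ n.choose (k+2) := Nat.choose_le_choose _ (by omega)

lemma f_mono {k : ℕ} : ∀ {m m' : ℕ}, m ≤ m' → f k m ≤ f k m' := by
  induction k with
  | zero => intro m m' _; simp
  | succ k ih =>
    intro m m' h
    rcases Nat.eq_zero_or_pos m with h0 | h0
    · simp [h0]
    have h0' : 1 ≤ m' := by omega
    set p := ftop (k+1) m with hp
    set p' := ftop (k+1) m' with hp'
    have t1 : p.choose (k+1) ≤ m := ftop_spec (by omega) h0
    have t2 : m < (p+1).choose (k+1) := lt_ftop_succ (by omega) h0
    have t3 : k+1 ≤ p := le_ftop (by omega) h0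
    have s1 : p'.choose (k+1) ≤ m' := ftop_spec (by omega) h0'
    have s2 : m' < (p'+1).choose (k+1) := lt_ftop_succ (by omega) h0'
    have s3 : k+1 ≤ p' := le_ftop (by omega) h0'
    have hpp : p ≤ p' := by
      by_contra hc
      push_neg at hc
      have := Nat.choose_le_choose (k+1) (show p'+1 ≤ p by omega)
      omega
    rw [f_eval h0, f_eval h0', ← hp, ← hp']
    rcases eq_or_lt_of_le hpp with heq | hlt
    · rw [← heq]
      have := ih (show m - p.choose (k+1) ≤ m' - p.choose (k+1) by omega)
      omega
    · have hr : m - p.choose (k+1) ≤ p.choose k := by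
        rw [pascal p (k+1) (by omega)] at t2
        simp only [Nat.add_sub_cancel] at t2
        omega
      have h4 := f_le_choose hr
      calc p.choose (k+2) + f k (m - p.choose (k+1)) ≤ p.choose (k+2) + p.choose (k+1) := by omega
        _ = (p+1).choose (k+2) := by
            rw [pascal p (k+2) (by omega)]
            have e : k+2-1 = k+1 := by omega
            rw [e]
            omega
        _ ≤ p'.choose (k+2) := Nat.choose_le_choose _ (by omega)
        _ ≤ _ := by omega

lemma f_one (x : ℕ) : f 1 x = x.choose 2 := by
  rcases Nat.eq_zero_or_pos x with h0 | h0
  · simp [h0]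
  · have htop : ftop 1 x = x := ftop_eq (le_refl _) (by omega) (by simp) (by simp)
    rw [f_eval h0, htop]
    simp

end KKAux

namespace KKAux

def Qp (k : ℕ) : Prop := ∀ n a d b : ℕ, a + d ≤ n.choose k → b + d = n.choose k →
  f k (a+d) + f k b ≤ n.choose (k+1) + f k a

def QSp (k : ℕ) : Prop := ∀ n a d b : ℕ, a + d < n.choose k → 1 ≤ d → b + d = n.choose k →
  f k (a+d) + f k b + 1 ≤ n.choose (k+1) + f k a

def DDp (k : ℕ) : Prop := ∀ m d b : ℕ, k ≤ m → 1 ≤ d → b + d = m.choose (k-1) →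
  m.choose (k+1) + f (k-1) b + 1 ≤ m.choose k + f k (m.choose k - d)

def DDXp (k : ℕ) : Prop := ∀ m t b : ℕ, k ≤ m → 1 ≤ t → b + t = m.choose (k-2) →
  m.choose (k+1) + f (k-1) b + 1 ≤ m.choose (k-1) + f k (m.choose k - t)

def F6p (k : ℕ) : Prop := ∀ a b : ℕ, f k a + f k b ≤ f k (a+b)

def LVLp (k : ℕ) : Prop := ∀ x : ℕ, f k x ≤ f (k-1) x

lemma choose_desc {m k : ℕ} (h3 : 3 ≤ k) (hm : k ≤ m)
    (h : m.choose (k-1) < m.choose (k-2)) : m.choose k < m.choose (k-1) := by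
  have e1 : m.choose (k-2+1) * (k-2+1) = m.choose (k-2) * (m - (k-2)) :=
    Nat.choose_succ_right_eq m (k-2)
  have e2 : m.choose (k-1+1) * (k-1+1) = m.choose (k-1) * (m - (k-1)) :=
    Nat.choose_succ_right_eq m (k-1)
  have r1 : k - 2 + 1 = k - 1 := by omega
  have r2 : k - 1 + 1 = k := by omega
  rw [r1] at e1
  rw [r2] at e2
  have hp1 : 0 < m.choose (k-1) := Nat.choose_pos (by omega)
  have hp2 : 0 < m.choose (k-2) := Nat.choose_pos (by omega)
  -- from e1 and h : m - (k-2) < k - 1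
  have hlt : m - (k-2) < k - 1 := by
    by_contra hc
    push_neg at hc
    have : m.choose (k-2) * (k-1) ≤ m.choose (k-2) * (m - (k-2)) :=
      Nat.mul_le_mul_left _ hc
    nlinarith
  have : m.choose k * k < m.choose (k-1) * k := by
    calc m.choose k * k = m.choose (k-1) * (m - (k-1)) := e2
      _ < m.choose (k-1) * k := mul_lt_mul_of_pos_left (by omega) hp1
  exact Nat.lt_of_mul_lt_mul_right this

/-- DD' and DDX for k = 2, directly. -/
lemma DD2 : DDp 2 := by
  intro m d b hm hd hb
  simp only [show (2:ℕ)-1 = 1 from rfl, show (2:ℕ)+1 = 3 from rfl] at hb ⊢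
  rw [Nat.choose_one_right] at hb
  rw [f_one]
  rcases eq_or_lt_of_le hm with h2 | h2
  · -- m = 2
    have : b ≤ 1 := by omega
    have hb2 : b.choose 2 = 0 := Nat.choose_eq_zero_of_lt (by omega)
    rw [← h2]
    simp [hb2]
  -- m ≥ 3
  have p1 : m.choose 2 = (m-1).choose 1 + (m-1).choose 2 := by
    have := pascal (m-1) 2 (by omega)
    simp only [show (2:ℕ)-1 = 1 from rfl] at this
    rw [show m-1+1 = m by omega] at this
    exact this
  have p2 : m.choose 3 = (m-1).choose 2 + (m-1).choose 3 := by
    have := pascal (m-1) 3 (by omega)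
    simp only [show (3:ℕ)-1 = 2 from rfl] at this
    rw [show m-1+1 = m by omega] at this
    exact this
  rw [Nat.choose_one_right] at p1
  rcases le_or_gt d (m-1) with hdm | hdm
  · -- main case
    have hskey : m.choose 2 - d = (m-1).choose 2 + (m-1-d) := by omega
    have hkey : f 2 ((m-1).choose 2 + (m-1-d)) = (m-1).choose 3 + f 1 (m-1-d) := by
      have := fKEY (k := 2) (m := m-1) (e := m-1-d) (by omega) (by omega)
        (by rw [show (2:ℕ)-1 = 1 from rfl, Nat.choose_one_right]; omega)
      simpa using this
    rw [hskey, hkey, f_one]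
    -- b = m - d = (m-1-d) + 1
    have hb' : b = (m-1-d) + 1 := by omega
    have c1 : b.choose 2 = (m-1-d).choose 1 + (m-1-d).choose 2 := by
      rw [hb']
      have := pascal (m-1-d) 2 (by omega)
      simpa using this
    rw [Nat.choose_one_right] at c1
    omega
  · -- d = m
    have hdm' : d = m := by omega
    have hb0 : b = 0 := by omega
    subst hb0
    rcases le_or_gt m 3 with h3 | h3
    · -- m = 3, d = 3
      have : m = 3 := by omega
      subst this
      subst hdm'
      simp [f]
    · -- m ≥ 4
      have p3 : (m-1).choose 2 = (m-2).choose 1 + (m-2).choose 2 := by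
        have := pascal (m-2) 2 (by omega)
        simp only [show (2:ℕ)-1 = 1 from rfl] at this
        rw [show m-2+1 = m-1 by omega] at this
        exact this
      have p4 : (m-2).choose 2 = (m-3).choose 1 + (m-3).choose 2 := by
        have := pascal (m-3) 2 (by omega)
        simp only [show (2:ℕ)-1 = 1 from rfl] at this
        rw [show m-3+1 = m-2 by omega] at this
        exact this
      rw [Nat.choose_one_right] at p3 p4
      have hskey : m.choose 2 - d = (m-2).choose 2 + (m-3) := by omega
      have hkey : f 2 ((m-2).choose 2 + (m-3)) = (m-2).choose 3 + f 1 (m-3) := by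
        have := fKEY (k := 2) (m := m-2) (e := m-3) (by omega) (by omega)
          (by rw [show (2:ℕ)-1 = 1 from rfl, Nat.choose_one_right]; omega)
        simpa using this
      rw [hskey, hkey, f_one]
      have p5 : (m-1).choose 3 = (m-2).choose 2 + (m-2).choose 3 := by
        have := pascal (m-2) 3 (by omega)
        simp only [show (3:ℕ)-1 = 2 from rfl] at this
        rw [show m-2+1 = m-1 by omega] at this
        exact this
      have hch : (0:ℕ).choose 2 = 0 := by simp
      omega

lemma DDX2 : DDXp 2 := by
  intro m t b hm ht hb
  simp only [show (2:ℕ)-2 = 0 from rfl, show (2:ℕ)+1 = 3 from rfl, Nat.choose_zero_right] at hb ⊢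
  have ht1 : t = 1 := by omega
  have hb0 : b = 0 := by omega
  subst ht1; subst hb0
  simp only [show (2:ℕ)-1 = 1 from rfl, Nat.choose_one_right, f_zero]
  rcases eq_or_lt_of_le hm with h2 | h2
  · rw [← h2]; simp [f]
  -- m ≥ 3
  have p1 : m.choose 2 = (m-1) + (m-1).choose 2 := by
    have := pascal (m-1) 2 (by omega)
    simp only [show (2:ℕ)-1 = 1 from rfl, Nat.choose_one_right] at this
    rw [show m-1+1 = m by omega] at this
    exact this
  have p2 : m.choose 3 = (m-1).choose 2 + (m-1).choose 3 := by
    have := pascal (m-1) 3 (by omega)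
    simp only [show (3:ℕ)-1 = 2 from rfl] at this
    rw [show m-1+1 = m by omega] at this
    exact this
  have hskey : m.choose 2 - 1 = (m-1).choose 2 + (m-2) := by omega
  have hkey : f 2 ((m-1).choose 2 + (m-2)) = (m-1).choose 3 + f 1 (m-2) := by
    have := fKEY (k := 2) (m := m-1) (e := m-2) (by omega) (by omega)
      (by rw [show (2:ℕ)-1 = 1 from rfl, Nat.choose_one_right]; omega)
    simpa using this
  rw [hskey, hkey, f_one]
  have c1 : (m-2).choose 2 + (m-2) = (m-1).choose 2 := by
    have := pascal (m-2) 2 (by omega)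
    simp only [show (2:ℕ)-1 = 1 from rfl, Nat.choose_one_right] at this
    rw [show m-2+1 = m-1 by omega] at this
    omega
  omega

end KKAux

namespace KKAux

theorem DD_ge3 {k : ℕ} (hk : 3 ≤ k) (Qkm : Qp (k-1)) (DDkm : DDp (k-1)) (LVLkm : LVLp (k-1)) :
    DDp k ∧ DDXp k := by
  have ddx_of_dd : ∀ m, k ≤ m →
      (∀ d b, 1 ≤ d → b + d = m.choose (k-1) →
        m.choose (k+1) + f (k-1) b + 1 ≤ m.choose k + f k (m.choose k - d)) →
      (∀ t b, 1 ≤ t → b + t = m.choose (k-2) →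
        m.choose (k+1) + f (k-1) b + 1 ≤ m.choose (k-1) + f k (m.choose k - t)) := by
    intro m hm hdd
    have bounded : ∀ t b, 1 ≤ t → t ≤ m.choose (k-1) → b + t = m.choose (k-2) →
        m.choose (k+1) + f (k-1) b + 1 ≤ m.choose (k-1) + f k (m.choose k - t) := by
      intro t b ht htR hb
      have h1 := hdd t (m.choose (k-1) - t) ht (by omega)
      have h2 := DDkm m t b (by omega) ht (by rw [show k-1-1 = k-2 by omega]; exact hb)
      rw [show k-1+1 = k by omega] at h2
      have h3 : f (k-1) b ≤ f (k-1-1) b := LVLkm b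
      rw [show k-1-1 = k-2 by omega] at h2 h3
      omega
    intro t b ht hb
    rcases le_or_gt t (m.choose (k-1)) with hle | hgt
    · exact bounded t b ht hle hb
    · have hlt2 : m.choose (k-1) < m.choose (k-2) := by omega
      have hdesc : m.choose k < m.choose (k-1) := choose_desc hk hm hlt2
      have hz1 : m.choose k - t = 0 := by omega
      have hz2 : m.choose k - m.choose (k-1) = 0 := by omega
      have hR1 : 1 ≤ m.choose (k-1) := Nat.choose_pos (by omega)
      have h4 := bounded (m.choose (k-1)) (m.choose (k-2) - m.choose (k-1)) hR1 (le_refl _)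
        (by omega)
      rw [hz2] at h4
      have h5 : f (k-1) b ≤ f (k-1) (m.choose (k-2) - m.choose (k-1)) := f_mono (by omega)
      rw [hz1]
      omega
  have dd : ∀ m, k ≤ m → (∀ d b, 1 ≤ d → b + d = m.choose (k-1) →
      m.choose (k+1) + f (k-1) b + 1 ≤ m.choose k + f k (m.choose k - d)) := by
    intro m hm
    induction m, hm using Nat.le_induction with
    | base =>
      intro d b hd hb
      have hck : (k:ℕ).choose (k-1) = k := by
        have h1 := Nat.choose_symm (show 1 ≤ k by omega)
        rw [Nat.choose_one_right] at h1
        rw [show k - 1 = k - 1 by rfl] at h1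
        exact h1
      rw [hck] at hb
      have hb0 : f (k-1) b = 0 := f_eq_zero (by omega)
      rw [Nat.choose_self, Nat.choose_succ_self, hb0]
      simp
    | succ m hm ih =>
      intro d b hd hb
      have hddx := ddx_of_dd m hm ih
      have chK : (m+1).choose k = m.choose (k-1) + m.choose k := pascal m k (by omega)
      have chK1 : (m+1).choose (k+1) = m.choose k + m.choose (k+1) := by
        have h := pascal m (k+1) (by omega)
        rw [show k+1-1 = k by omega] at h
        exact h
      have chR : (m+1).choose (k-1) = m.choose (k-2) + m.choose (k-1) := by
        have h := pascal m (k-1) (by omega)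
        rw [show k-1-1 = k-2 by omega] at h
        exact h
      rw [chR] at hb
      rcases le_or_gt d (m.choose (k-1)) with hd1 | hd1
      · -- case A : d ≤ R1
        have e1 : (m+1).choose k - d = m.choose k + (m.choose (k-1) - d) := by omega
        have e2 : f k (m.choose k + (m.choose (k-1) - d))
            = m.choose (k+1) + f (k-1) (m.choose (k-1) - d) :=
          fKEY (by omega) (by omega) (by omega)
        rcases le_or_gt d (m.choose (k-2)) with hd2 | hd2
        · -- A1
          have e3 : b = m.choose (k-1) + (m.choose (k-2) - d) := by omega
          have e4 : f (k-1) b = m.choose k + f (k-2) (m.choose (k-2) - d) := by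
            rw [e3]
            have h := fKEY (k := k-1) (m := m) (e := m.choose (k-2) - d) (by omega) (by omega)
              (by rw [show k-1-1 = k-2 by omega]; omega)
            rw [show k-1+1 = k by omega, show k-1-1 = k-2 by omega] at h
            exact h
          have h5 := DDkm m d (m.choose (k-2) - d) (by omega) hd
            (by rw [show k-1-1 = k-2 by omega]; omega)
          rw [show k-1+1 = k by omega, show k-1-1 = k-2 by omega] at h5
          rw [e1, e2, e4, chK1, chK]
          omega
        · -- A2 : R2 < d ≤ R1
          have q := Qkm m (m.choose (k-1) - d) (m.choose (k-2))
            (m.choose (k-1) - m.choose (k-2)) (by omega) (by omega)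
          rw [show k-1+1 = k by omega] at q
          have hR2pos : 1 ≤ m.choose (k-2) := Nat.choose_pos (by omega)
          have hdd0 := DDkm m (m.choose (k-2)) 0 (by omega) hR2pos
            (by rw [show k-1-1 = k-2 by omega]; omega)
          rw [show k-1+1 = k by omega] at hdd0
          simp only [f_zero] at hdd0
          have e3 : b = (m.choose (k-1) - d) + m.choose (k-2) := by omega
          rw [e1, e2, chK1, chK, e3]
          omega
      · -- case B : d > R1
        have h6 := hddx (d - m.choose (k-1)) b (by omega) (by omega)
        have e1 : (m+1).choose k - d = m.choose k - (d - m.choose (k-1)) := by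
          rw [chK]; omega
        rw [e1, chK1, chK]
        omega
  exact ⟨fun m d b hm => dd m hm d b, fun m t b hm => ddx_of_dd m hm (dd m hm) t b⟩

end KKAux

namespace KKAux

lemma q1n : ∀ d a b n : ℕ, a ≤ b → a + d ≤ n → b + d = n →
    (a+d).choose 2 + b.choose 2 ≤ n.choose 2 + a.choose 2 := by
  intro d
  induction d with
  | zero =>
    intro a b n hab h1 h2
    have : b = n := by omega
    subst this
    simp only [Nat.add_zero]
    omega
  | succ d ih =>
    intro a b n hab h1 h2
    have hih := ih (a+1) (b+1) n (by omega) (by omega) (by omega)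
    have ea : (a+1).choose 2 = a + a.choose 2 := by
      have h := pascal a 2 (by omega)
      rw [show (2:ℕ)-1 = 1 from rfl, Nat.choose_one_right] at h
      exact h
    have eb : (b+1).choose 2 = b + b.choose 2 := by
      have h := pascal b 2 (by omega)
      rw [show (2:ℕ)-1 = 1 from rfl, Nat.choose_one_right] at h
      exact h
    rw [show a+1+d = a+(d+1) by omega] at hih
    omega

lemma q1s : ∀ d a b n : ℕ, a < b → a + d ≤ n → b + d = n →
    (a+d).choose 2 + b.choose 2 + d ≤ n.choose 2 + a.choose 2 := by
  intro d
  induction d with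
  | zero =>
    intro a b n hab h1 h2
    have : b = n := by omega
    subst this
    simp only [Nat.add_zero]
    omega
  | succ d ih =>
    intro a b n hab h1 h2
    have hih := ih (a+1) (b+1) n (by omega) (by omega) (by omega)
    have ea : (a+1).choose 2 = a + a.choose 2 := by
      have h := pascal a 2 (by omega)
      rw [show (2:ℕ)-1 = 1 from rfl, Nat.choose_one_right] at h
      exact h
    have eb : (b+1).choose 2 = b + b.choose 2 := by
      have h := pascal b 2 (by omega)
      rw [show (2:ℕ)-1 = 1 from rfl, Nat.choose_one_right] at h
      exact h
    rw [show a+1+d = a+(d+1) by omega] at hih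
    omega

lemma Q1 : Qp 1 := by
  intro n a d b h1 h2
  rw [Nat.choose_one_right] at h1 h2
  rw [show (1:ℕ)+1 = 2 from rfl, f_one, f_one, f_one]
  exact q1n d a b n (by omega) h1 h2

lemma QS1 : QSp 1 := by
  intro n a d b h1 hd h2
  rw [Nat.choose_one_right] at h1 h2
  rw [show (1:ℕ)+1 = 2 from rfl, f_one, f_one, f_one]
  have := q1s d a b n (by omega) (by omega) h2
  omega

lemma Q0 : Qp 0 := by
  intro n a d b _ _
  simp

lemma QS0 : QSp 0 := by
  intro n a d b h1 hd _
  simp only [Nat.choose_zero_right] at h1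
  omega

lemma F60 : F6p 0 := by intro a b; simp

lemma F61 : F6p 1 := by
  intro a b
  rw [f_one, f_one, f_one]
  induction b with
  | zero => simp
  | succ b ih =>
    have e1 : (b+1).choose 2 = b + b.choose 2 := by
      have h := pascal b 2 (by omega)
      rw [show (2:ℕ)-1 = 1 from rfl, Nat.choose_one_right] at h
      exact h
    have e2 : (a+(b+1)).choose 2 = (a+b) + (a+b).choose 2 := by
      have h := pascal (a+b) 2 (by omega)
      rw [show (2:ℕ)-1 = 1 from rfl, Nat.choose_one_right, show a+b+1 = a+(b+1) by omega] at h
      exact h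
    omega

theorem Q_ge2 {k : ℕ} (hk : 2 ≤ k) (Qm : Qp (k-1)) (QSm : QSp (k-1)) (F6m : F6p (k-1))
    (DDk : DDp k) : Qp k ∧ QSp k := by
  suffices h : ∀ n : ℕ, (∀ a d b : ℕ, a + d ≤ n.choose k → b + d = n.choose k →
      f k (a+d) + f k b ≤ n.choose (k+1) + f k a) ∧ (∀ a d b : ℕ, a + d < n.choose k → 1 ≤ d →
      b + d = n.choose k → f k (a+d) + f k b + 1 ≤ n.choose (k+1) + f k a) by
    exact ⟨fun n => (h n).1, fun n => (h n).2⟩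
  intro n
  induction n with
  | zero =>
    constructor
    · intro a d b h1 h2
      rw [Nat.choose_eq_zero_of_lt (by omega)] at h1 h2
      have ha : a = 0 := by omega
      have hb : b = 0 := by omega
      have hd : d = 0 := by omega
      subst ha; subst hb; subst hd
      simp
    · intro a d b h1 hd h2
      rw [Nat.choose_eq_zero_of_lt (by omega)] at h1
      omega
  | succ n ihn =>
    rcases lt_or_ge n k with hsmall | hnk
    · have hJle : (n+1).choose k ≤ 1 := by
        rcases Nat.lt_or_ge (n+1) k with h | h
        · rw [Nat.choose_eq_zero_of_lt h]; omega
        · have : n + 1 = k := by omega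
          rw [this, Nat.choose_self]
      constructor
      · intro a d b h1 h2
        rw [f_eq_zero (show a + d ≤ k by omega), f_eq_zero (show b ≤ k by omega)]
        omega
      · intro a d b h1 hd h2
        omega
    · obtain ⟨Qn, QSn⟩ := ihn
      have chK : (n+1).choose k = n.choose (k-1) + n.choose k := pascal n k (by omega)
      have chK1 : (n+1).choose (k+1) = n.choose k + n.choose (k+1) := by
        have h := pascal n (k+1) (by omega)
        rw [show k+1-1 = k by omega] at h
        exact h
      have UK : ∀ e, e ≤ n.choose (k-1) → f k (n.choose k + e) = n.choose (k+1) + f (k-1) e :=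
        fun e he => fKEY2 hk hnk he
      have QSfull : ∀ a d b : ℕ, a + d < (n+1).choose k → 1 ≤ d → b + d = (n+1).choose k →
          f k (a+d) + f k b + 1 ≤ (n+1).choose (k+1) + f k a := by
        intro a d b hlt hd heq
        rcases le_or_gt (a+d) (n.choose k) with hw | hw
        · -- case α
          have q1 := Qn a d (n.choose k - d) hw (by omega)
          rcases le_or_gt d (n.choose (k-1)) with hdR | hdR
          · have e2 : f k b = n.choose (k+1) + f (k-1) (n.choose (k-1) - d) := by
              have h := UK (n.choose (k-1) - d) (by omega)
              rw [show n.choose k + (n.choose (k-1) - d) = b by omega] at h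
              exact h
            have hdd := DDk n d (n.choose (k-1) - d) hnk hd (by omega)
            rw [e2, chK1]
            omega
          · have q2 := Qn (n.choose k - d) (n.choose (k-1)) (n.choose k - n.choose (k-1))
              (by omega) (by omega)
            have hdd := DDk n (n.choose (k-1)) 0 hnk (Nat.choose_pos (by omega)) (by omega)
            simp only [f_zero] at hdd
            have eb : b = (n.choose k - d) + n.choose (k-1) := by omega
            rw [chK1, eb]
            omega
        · -- case β
          have hw1R : a + d - n.choose k < n.choose (k-1) := by omega
          have efw : f k (a+d) = n.choose (k+1) + f (k-1) (a + d - n.choose k) := by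
            have h := UK (a + d - n.choose k) (le_of_lt hw1R)
            rw [show n.choose k + (a + d - n.choose k) = a + d by omega] at h
            exact h
          rcases le_or_gt (n.choose k) a with ha | ha
          · -- β1
            have efa : f k a = n.choose (k+1) + f (k-1) (a - n.choose k) := by
              have h := UK (a - n.choose k) (by omega)
              rw [show n.choose k + (a - n.choose k) = a by omega] at h
              exact h
            have efb : f k b = n.choose (k+1) + f (k-1) (n.choose (k-1) - d) := by
              have h := UK (n.choose (k-1) - d) (by omega)
              rw [show n.choose k + (n.choose (k-1) - d) = b by omega] at h
              exact h
            have qs := QSm n (a - n.choose k) d (n.choose (k-1) - d) (by omega) hd (by omega)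
            rw [show k-1+1 = k by omega] at qs
            rw [show a - n.choose k + d = a + d - n.choose k by omega] at qs
            rw [efw, efa, efb, chK1]
            omega
          · -- β2
            have hd2 : 1 ≤ n.choose k - a := by omega
            rcases le_or_gt d (n.choose (k-1)) with hdR | hdR
            · -- β2a
              have efb : f k b = n.choose (k+1) + f (k-1) (n.choose (k-1) - d) := by
                have h := UK (n.choose (k-1) - d) (by omega)
                rw [show n.choose k + (n.choose (k-1) - d) = b by omega] at h
                exact h
              have hf6 := F6m (a + d - n.choose k) (n.choose (k-1) - d)
              rw [show a + d - n.choose k + (n.choose (k-1) - d)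
                  = n.choose (k-1) - (n.choose k - a) by omega] at hf6
              have hdd := DDk n (n.choose k - a) (n.choose (k-1) - (n.choose k - a)) hnk hd2
                (by omega)
              rw [show n.choose k - (n.choose k - a) = a by omega] at hdd
              rw [efw, efb, chK1]
              omega
            · -- β2b
              have hδ : 1 ≤ n.choose (k-1) - (a + d - n.choose k) := by omega
              have q3 := Qn a (n.choose (k-1) - (a + d - n.choose k))
                (n.choose k - (n.choose (k-1) - (a + d - n.choose k))) (by omega) (by omega)
              have hdd := DDk n (n.choose (k-1) - (a + d - n.choose k)) (a + d - n.choose k)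
                hnk hδ (by omega)
              rw [show a + (n.choose (k-1) - (a + d - n.choose k)) = b by omega] at q3
              rw [efw, chK1]
              omega
      refine ⟨?_, QSfull⟩
      intro a d b h1 h2
      rcases Nat.eq_zero_or_pos d with hd0 | hd0
      · subst hd0
        have : b = (n+1).choose k := by omega
        subst this
        rw [f_choose (by omega)]
        simp only [Nat.add_zero]
        omega
      rcases eq_or_lt_of_le h1 with hWJ | hWJ
      · have hab : a = b := by omega
        subst hab
        rw [hWJ, f_choose (by omega)]
      · have := QSfull a d b hWJ hd0 h2
        omega

end KKAux

namespace KKAux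

theorem LVL_ge2 {k : ℕ} (hk : 2 ≤ k) (F6m : F6p (k-1)) : LVLp k := by
  have LVB : ∀ p : ℕ, p.choose (k+1) ≤ f (k-1) (p.choose k) := by
    intro p
    induction p with
    | zero =>
      rw [Nat.choose_eq_zero_of_lt (show 0 < k + 1 by omega)]
      omega
    | succ p ih =>
      have e1 : (p+1).choose k = p.choose (k-1) + p.choose k := pascal p k (by omega)
      have e2 : (p+1).choose (k+1) = p.choose k + p.choose (k+1) := by
        have h := pascal p (k+1) (by omega)
        rw [show k+1-1 = k by omega] at h
        exact h
      have h3 := F6m (p.choose (k-1)) (p.choose k)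
      have h4 : f (k-1) (p.choose (k-1)) = p.choose k := by
        have h := f_choose (k := k-1) (n := p) (by omega)
        rw [show k-1+1 = k by omega] at h
        exact h
      rw [e1, e2]
      omega
  intro x
  rcases Nat.eq_zero_or_pos x with h0 | h0
  · simp [h0]
  set p := ftop k x with hp
  have t1 : p.choose k ≤ x := ftop_spec (by omega) h0
  have t3 : k ≤ p := le_ftop (by omega) h0
  have t2 : x < (p+1).choose k := lt_ftop_succ (by omega) h0
  have hRp : x - p.choose k < p.choose (k-1) := by
    have := pascal p k (by omega)
    omega
  have efx : f k x = p.choose (k+1) + f (k-1) (x - p.choose k) := by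
    have h := fKEY (show 1 ≤ k by omega) t3 hRp
    rw [show p.choose k + (x - p.choose k) = x by omega] at h
    exact h
  have h5 := F6m (p.choose k) (x - p.choose k)
  rw [show p.choose k + (x - p.choose k) = x by omega] at h5
  have h6 := LVB p
  omega

theorem F6_ge2 {k : ℕ} (hk : 2 ≤ k) (F6m : F6p (k-1)) (Qm : Qp (k-1)) (Qk : Qp k)
    (DDk : DDp k) (LVLk : LVLp k) : F6p k := by
  have main : ∀ N b a : ℕ, b ≤ N → b ≤ a → f k a + f k b ≤ f k (a+b) := by
    intro N
    induction N with
    | zero =>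
      intro b a hbN hba
      have : b = 0 := by omega
      subst this
      simp
    | succ N ihN =>
      intro b a hbN hba
      rcases Nat.eq_zero_or_pos b with h0 | h0
      · subst h0; simp
      have ha0 : 1 ≤ a := by omega
      set p := ftop k a with hp
      have t1 : p.choose k ≤ a := ftop_spec (by omega) ha0
      have t2 : a < (p+1).choose k := lt_ftop_succ (by omega) ha0
      have t3 : k ≤ p := le_ftop (by omega) ha0
      have hRp : a - p.choose k < p.choose (k-1) := by
        have := pascal p k (by omega)
        omega
      have efa : f k a = p.choose (k+1) + f (k-1) (a - p.choose k) := by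
        have h := fKEY (show 1 ≤ k by omega) t3 hRp
        rw [show p.choose k + (a - p.choose k) = a by omega] at h
        exact h
      rcases lt_or_ge (a - p.choose k + b) (p.choose (k-1)) with hI | hII
      · -- case I
        have ekey : f k (a+b) = p.choose (k+1) + f (k-1) (a - p.choose k + b) := by
          have h := fKEY (show 1 ≤ k by omega) t3 hI
          rw [show p.choose k + (a - p.choose k + b) = a + b by omega] at h
          exact h
        have h3 := F6m (a - p.choose k) b
        have h4 := LVLk b
        rw [efa, ekey]
        omega
      · -- case II
        set d := p.choose (k-1) - (a - p.choose k) with hd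
        have hd1 : 1 ≤ d := by omega
        have hdb : d ≤ b := by omega
        have claimC : f (k-1) (a - p.choose k) + f k b ≤ p.choose k + f k (b - d) := by
          rcases le_or_gt b (p.choose k) with hbp | hbp
          · have q := Qk p (b - d) d (p.choose k - d) (by omega) (by omega)
            have hdd := DDk p d (a - p.choose k) t3 hd1 (by omega)
            rw [show b - d + d = b by omega] at q
            omega
          · have hb' : b - p.choose k < p.choose (k-1) := by
              have h2' : b < (p+1).choose k := by omega
              have := pascal p k (by omega)
              omega
            have efb : f k b = p.choose (k+1) + f (k-1) (b - p.choose k) := by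
              have h := fKEY (show 1 ≤ k by omega) t3 hb'
              rw [show p.choose k + (b - p.choose k) = b by omega] at h
              exact h
            rcases le_or_gt d (b - p.choose k) with hbd | hbd
            · have efw : f k (b - d) = p.choose (k+1) + f (k-1) (b - p.choose k - d) := by
                have h := fKEY (show 1 ≤ k by omega) t3
                  (show b - p.choose k - d < p.choose (k-1) by omega)
                rw [show p.choose k + (b - p.choose k - d) = b - d by omega] at h
                exact h
              have q := Qm p (b - p.choose k - d) d (a - p.choose k) (by omega) (by omega)
              rw [show k-1+1 = k by omega] at q
              rw [show b - p.choose k - d + d = b - p.choose k by omega] at q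
              rw [efb, efw]
              omega
            · have h3 := F6m (a - p.choose k) (b - p.choose k)
              have hdd := DDk p (d - (b - p.choose k)) ((a - p.choose k) + (b - p.choose k))
                t3 (by omega) (by omega)
              rw [efb]
              rw [show p.choose k - (d - (b - p.choose k)) = b - d by omega] at hdd
              omega
        have hrec := ihN (b - d) ((p+1).choose k) (by omega) (by omega)
        have echoose : f k ((p+1).choose k) = (p+1).choose (k+1) := f_choose (by omega)
        have esum : (p+1).choose k + (b - d) = a + b := by
          have := pascal p k (by omega)
          omega
        have epas : (p+1).choose (k+1) = p.choose k + p.choose (k+1) := by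
          have h := pascal p (k+1) (by omega)
          rw [show k+1-1 = k by omega] at h
          exact h
        rw [esum, echoose, epas] at hrec
        rw [efa]
        omega
  intro a b
  rcases le_total b a with h | h
  · exact main b b a (le_refl _) h
  · have h2 := main a a b (le_refl _) h
    rw [Nat.add_comm b a] at h2
    omega

end KKAux

namespace KKAux

theorem bundle : ∀ k : ℕ, Qp k ∧ QSp k ∧ F6p k ∧ (2 ≤ k → (DDp k ∧ DDXp k ∧ LVLp k)) := by
  intro k
  induction k using Nat.strong_induction_on with
  | _ k ih =>
    match k with
    | 0 => exact ⟨Q0, QS0, F60, by omega⟩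
    | 1 => exact ⟨Q1, QS1, F61, by omega⟩
    | (k+2) =>
      obtain ⟨Qm, QSm, F6m, hg⟩ := ih (k+1) (by omega)
      rcases Nat.eq_zero_or_pos k with rfl | hkpos
      · have LVL2 : LVLp 2 := LVL_ge2 (k := 2) (by omega) F6m
        obtain ⟨Q2, QS2⟩ := Q_ge2 (by omega) Qm QSm F6m DD2
        have F62 := F6_ge2 (by omega) F6m Qm Q2 DD2 LVL2
        exact ⟨Q2, QS2, F62, fun _ => ⟨DD2, DDX2, LVL2⟩⟩
      · obtain ⟨DDm, DDXm, LVLm⟩ := hg (by omega)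
        obtain ⟨DDk, DDXk⟩ := DD_ge3 (show 3 ≤ k+2 by omega) Qm DDm LVLm
        have LVLk := LVL_ge2 (k := k+2) (by omega) F6m
        obtain ⟨Qk, QSk⟩ := Q_ge2 (by omega) Qm QSm F6m DDk
        have F6k := F6_ge2 (by omega) F6m Qm Qk DDk LVLk
        exact ⟨Qk, QSk, F6k, fun _ => ⟨DDk, DDXk, LVLk⟩⟩

/-- natural-number version of cSumZ -/
def cN (a : ℕ → ℕ) (s v : ℕ) : ℕ := ∑ i ∈ Finset.range (s + 1), (a i).choose (v - i)

lemma cSumZ_eq (a : ℕ → ℕ) (s v : ℕ) (h : s < v) : cSumZ a s (v : ℤ) = cN a s v := by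
  unfold cSumZ cN
  apply Finset.sum_congr rfl
  intro i hi
  rw [Finset.mem_range] at hi
  have hiv : i ≤ v := by omega
  unfold chooseZ
  rw [if_pos (by omega : (0:ℤ) ≤ (v:ℤ) - i)]
  congr 1
  omega

lemma cN_shift (a : ℕ → ℕ) (s v : ℕ) :
    cN a (s+1) v = (a 0).choose v + cN (fun i => a (i+1)) s (v-1) := by
  unfold cN
  rw [Finset.sum_range_succ' (fun i => (a i).choose (v - i)) (s+1)]
  simp only [Nat.sub_zero]
  rw [Nat.add_comm]
  congr 1
  apply Finset.sum_congr rfl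
  intro i _
  congr 1
  omega

lemma adm_chain {k s : ℕ} {a : ℕ → ℕ} (ha : Admissible k s a) :
    ∀ i ≤ s, a s + (s - i) ≤ a i := by
  obtain ⟨hs, hdec, hlast⟩ := ha
  intro i hi
  induction s with
  | zero => simp at hi; subst hi; omega
  | succ s ihs =>
    rcases Nat.lt_or_ge i (s+1) with h | h
    · have h1 := hdec s (by omega)
      have h2 := ihs (by omega) (fun j hj => hdec j (by omega)) (by omega) (by omega)
      omega
    · have : i = s + 1 := by omega
      subst this
      omega

lemma adm_ge {k s : ℕ} {a : ℕ → ℕ} (ha : Admissible k s a) : ∀ i ≤ s, k - i ≤ a i := by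
  intro i hi
  have h1 := adm_chain ha i hi
  have h2 := ha.2.2
  omega

lemma adm_tail {k s : ℕ} {a : ℕ → ℕ} (ha : Admissible k (s+1) a) :
    Admissible (k-1) s (fun i => a (i+1)) := by
  obtain ⟨hs, hdec, hlast⟩ := ha
  refine ⟨by omega, fun i hi => hdec (i+1) (by omega), by simp; omega⟩

lemma cN_lt {k s : ℕ} {a : ℕ → ℕ} (ha : Admissible k s a) :
    cN a s k < (a 0 + 1).choose k := by
  induction s generalizing k a with
  | zero =>
    have h0 : k ≤ a 0 := by
      have := adm_ge ha 0 (le_refl _)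
      omega
    unfold cN
    rw [Finset.sum_range_succ, Finset.sum_range_zero, Nat.zero_add, Nat.sub_zero]
    exact choose_lt_choose_left (show 1 ≤ k by have := ha.1; omega) h0 (by omega)
  | succ s ihs =>
    have hk2 : 2 ≤ k := by
      have := ha.1
      omega
    rw [cN_shift]
    have htail := adm_tail ha
    have h1 : cN (fun i => a (i+1)) s (k-1) < (a 1 + 1).choose (k-1) := ihs htail
    have h2 : (a 1 + 1).choose (k-1) ≤ (a 0).choose (k-1) :=
      Nat.choose_le_choose _ (ha.2.1 0 (by omega))
    have h3 : (a 0 + 1).choose k = (a 0).choose (k-1) + (a 0).choose k :=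
      pascal (a 0) k (by omega)
    omega

lemma cN_pos {k s : ℕ} {a : ℕ → ℕ} (ha : Admissible k s a) : 1 ≤ cN a s k := by
  have h0 : k ≤ a 0 := by
    have := adm_ge ha 0 (by omega)
    omega
  have hterm : 1 ≤ (a 0).choose k := Nat.choose_pos h0
  unfold cN
  calc (1:ℕ) ≤ (a 0).choose (k - 0) := by simpa using hterm
    _ ≤ _ := Finset.single_le_sum (f := fun i => (a i).choose (k - i))
        (fun i _ => Nat.zero_le _) (Finset.mem_range.mpr (by omega))

lemma cN_rep {k s : ℕ} {a : ℕ → ℕ} (ha : Admissible k s a) :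
    f k (cN a s k) = cN a s (k+1) := by
  induction s generalizing k a with
  | zero =>
    have h1 : 1 ≤ k := ha.1
    unfold cN
    rw [Finset.sum_range_succ, Finset.sum_range_zero, Nat.zero_add, Nat.sub_zero,
      Finset.sum_range_succ, Finset.sum_range_zero, Nat.zero_add, Nat.sub_zero]
    exact f_choose h1
  | succ s ihs =>
    have hk2 : 2 ≤ k := by have := ha.1; omega
    have htail := adm_tail ha
    have hbnd : cN (fun i => a (i+1)) s (k-1) < (a 0).choose (k-1) := by
      have h1 : cN (fun i => a (i+1)) s (k-1) < (a 1 + 1).choose (k-1) := cN_lt htail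
      have h2 : (a 1 + 1).choose (k-1) ≤ (a 0).choose (k-1) :=
        Nat.choose_le_choose _ (ha.2.1 0 (by omega))
      omega
    have h0 : k ≤ a 0 := by have := adm_ge ha 0 (by omega); omega
    rw [cN_shift, cN_shift]
    have hkey := fKEY (k := k) (m := a 0) (e := cN (fun i => a (i+1)) s (k-1))
      (by omega) h0 hbnd
    rw [hkey]
    have hrep := ihs htail
    rw [show k+1-1 = k by omega, show (k-1)+1 = k by omega] at *
    omega

end KKAux

open KKAux in
/-- Lemma (algorithm, second form): for `k > 0`, sequences admissible for `k`, and `j` with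
`j > c_k` and `j > a_k`, if `Σ C(c_{k-i}, k-i) + Σ C(a_{k-i}, k-i) = C(j, k) + Σ C(b_{k-i}, k-i)`,
then `C(j, k+1) + Σ C(b_{k-i}, k+1-i) > Σ C(c_{k-i}, k+1-i) + Σ C(a_{k-i}, k+1-i)`. -/
theorem algorithm_lemma' (k s t u j : ℕ) (a b c : ℕ → ℕ) (hk : 0 < k)
    (ha : Admissible k s a) (hb : Admissible k t b) (hc : Admissible k u c)
    (hjc : c 0 < j) (hja : a 0 < j)
    (heq : cSumZ c u (k : ℤ) + cSumZ a s (k : ℤ) = j.choose k + cSumZ b t (k : ℤ)) :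
    cSumZ c u ((k : ℤ) + 1) + cSumZ a s ((k : ℤ) + 1) <
      j.choose (k + 1) + cSumZ b t ((k : ℤ) + 1) := by
  have hs := ha.1
  have ht := hb.1
  have hu := hc.1
  rw [cSumZ_eq c u k hu, cSumZ_eq a s k hs, cSumZ_eq b t k ht] at heq
  have hcast : ((k : ℤ) + 1) = ((k+1 : ℕ) : ℤ) := by push_cast; ring
  rw [hcast, cSumZ_eq c u (k+1) (by omega), cSumZ_eq a s (k+1) (by omega),
    cSumZ_eq b t (k+1) (by omega)]
  -- numeric setup
  have hX : cN c u k < j.choose k := by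
    have h1 := cN_lt hc
    have h2 : (c 0 + 1).choose k ≤ j.choose k := Nat.choose_le_choose _ (by omega)
    omega
  have hY : cN a s k < j.choose k := by
    have h1 := cN_lt ha
    have h2 : (a 0 + 1).choose k ≤ j.choose k := Nat.choose_le_choose _ (by omega)
    omega
  have hZpos := cN_pos hb
  have hXpos := cN_pos hc
  have hYpos := cN_pos ha
  obtain ⟨_, QSk, _, _⟩ := bundle k
  have happ := QSk j (cN b t k) (cN a s k - cN b t k) (cN c u k)
    (by omega) (by omega) (by omega)
  rw [show cN b t k + (cN a s k - cN b t k) = cN a s k by omega] at happ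
  rw [cN_rep ha, cN_rep hb, cN_rep hc] at happ
  omega
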